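/- Let q > 5/3 and let δ ∈ [0,1) satisfy δ ≤ 3 − 5/q. Then there exist real numbers p, σ, α, θ with 1 < p < 3, 1 ≤ σ ≤ q, 0 < α < 1 and 0 ≤ θ ≤ 1, such that 1/σ + 1/p + (2+δ)/3 = 2, α = (3/2)(1 − 1/p), 1/σ = θ + (1−θ)/q, and 1 − θ ≤ q(1 − α). -/

import Mathlib

set_option maxHeartbeats 1000000


theorem stmt15 (q δ : ℝ) (hq : 5 / 3 < q) (hδ : δ ∈ Set.Ico (0 : ℝ) 1)
    (hδq : δ ≤ 3 - 5 / q) :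
    ∃ p σ α θ : ℝ, 1 < p ∧ p < 3 ∧ 1 ≤ σ ∧ σ ≤ q ∧ 0 < α ∧ α < 1 ∧
      0 ≤ θ ∧ θ ≤ 1 ∧ 1 / σ + 1 / p + (2 + δ) / 3 = 2 ∧
      α = 3 / 2 * (1 - 1 / p) ∧ 1 / σ = θ + (1 - θ) / q ∧ 1 - θ ≤ q * (1 - α) := by
  obtain ⟨hδ0, hδ1⟩ := hδ
  have hq0 : (0:ℝ) < q := by linarith
  have hq1 : (1:ℝ) < q := by linarith
  have hc : q * (1 / q) = 1 := mul_one_div_cancel (ne_of_gt hq0)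
  have hc0 : (0:ℝ) < 1 / q := by positivity
  have h35 : (0:ℝ) < 3 * q - 5 := by linarith
  have h915 : (0:ℝ) < 9 * q - 15 := by linarith
  have hδc : δ ≤ 3 - 5 * (1 / q) := by
    have : (5:ℝ) / q = 5 * (1 / q) := by ring
    linarith [hδq, this.symm.le]
  have hδq2 : δ * q ≤ 3 * q - 5 := by nlinarith [hc]
  set x0 : ℝ := (3 * q - 5 + 2 * δ) / (9 * q - 15) with hx0def
  set A : ℝ := (4 - δ) / 3 - 1 / q with hAdef
  have hx0_13 : (1:ℝ)/3 ≤ x0 := by rw [hx0def, le_div_iff₀ h915]; linarith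
  have hx0_1 : x0 < 1 := by
    rw [hx0def, div_lt_one h915]
    nlinarith [hc, hc0]
  have hA_13 : (1:ℝ)/3 < A := by rw [hAdef]; linarith
  have hAx0 : x0 ≤ A := by
    rw [hx0def, hAdef, div_le_iff₀ h915]
    nlinarith [hc, hc0, mul_nonneg (by linarith : (0:ℝ) ≤ q - 1)
      (by linarith : (0:ℝ) ≤ 3 * q - 5 - δ * q)]
  set x : ℝ := min A ((1 + x0) / 2) with hxdef
  have hx13 : (1:ℝ)/3 < x := lt_min hA_13 (by linarith)
  have hx1 : x < 1 := lt_of_le_of_lt (min_le_right _ _) (by linarith)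
  have hxA : x ≤ A := min_le_left _ _
  have hxx0 : x0 ≤ x := le_min hAx0 (by linarith)
  have hxpos : (0:ℝ) < x := by linarith
  have hkey : 3 * q - 5 + 2 * δ ≤ x * (9 * q - 15) := by
    rw [hx0def] at hxx0
    exact (div_le_iff₀ h915).mp hxx0
  set s : ℝ := (4 - δ) / 3 - x with hsdef
  have hxA' : x ≤ (4 - δ) / 3 - 1 / q := by rw [hAdef] at hxA; exact hxA
  have hs_lb : 1 / q ≤ s := by rw [hsdef]; linarith
  have hs1 : s ≤ 1 := by rw [hsdef]; linarith
  have hs0 : (0:ℝ) < s := lt_of_lt_of_le hc0 hs_lb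
  have hq1' : (0:ℝ) < q - 1 := by linarith
  refine ⟨1/x, 1/s, 3/2 * (1 - x), (s - 1/q) * q / (q - 1), ?_, ?_, ?_, ?_, ?_, ?_, ?_, ?_, ?_, ?_, ?_, ?_⟩
  · rw [lt_div_iff₀ hxpos]; linarith
  · rw [div_lt_iff₀ hxpos]; linarith
  · rw [le_div_iff₀ hs0]; linarith
  · rw [div_le_iff₀ hs0]
    calc (1:ℝ) = q * (1 / q) := hc.symm
      _ ≤ q * s := mul_le_mul_of_nonneg_left hs_lb hq0.le
  · linarith
  · linarith
  · apply div_nonneg _ (by linarith)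
    apply mul_nonneg (by linarith) hq0.le
  · rw [div_le_one hq1']
    nlinarith [hc, hs1, hq0]
  · rw [one_div_one_div, one_div_one_div, hsdef]; ring
  · rw [one_div_one_div]
  · rw [one_div_one_div]
    field_simp
    ring
  · have hexp : (s - 1/q) * q / (q - 1) = (s * q - 1) / (q - 1) := by
      field_simp
    have h2 : 1 - (s * q - 1) / (q - 1) = (q - s * q) / (q - 1) := by
      field_simp
      ring
    rw [hexp, h2, div_le_iff₀ hq1', hsdef]
    nlinarith [mul_nonneg hq0.le
      (by linarith : (0:ℝ) ≤ x * (9 * q - 15) - (3 * q - 5 + 2 * δ))]
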